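/- Let K/F be a finite separable field extension, let (b_i)_{i∈ι} be an F-basis of K indexed by a finite type ι, let n be a natural number, and let M be an n×n matrix with entries in K. Consider the square matrix G indexed by ι × Fin n with entries G((i,k),(j,l)) = Tr_{K/F}(b_i · b_j · M k l). Then det G = (discr_F(b))^n · Norm_{K/F}(det M). -/

import Mathlib

open Matrix Polynomial

/-- Over a reduced commutative ring, `det (1 - B) = 1` for nilpotent `B`. -/
lemma aux_det_one_sub_of_isNilpotent {m F : Type*} [Fintype m] [DecidableEq m] [Field F]
    (B : Matrix m m F) (h : IsNilpotent B) : (1 - B).det = 1 := by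
  have hu := Matrix.isUnit_charpolyRev_of_isNilpotent h
  obtain ⟨r, hr, hp⟩ := Polynomial.isUnit_iff.mp hu
  have h0 : Polynomial.eval 0 B.charpolyRev = 1 := Matrix.eval_charpolyRev
  have hr1 : r = 1 := by rw [← hp] at h0; simpa using h0
  have hp1 : B.charpolyRev = 1 := by rw [← hp, hr1, Polynomial.C_1]
  have h1 : Polynomial.eval 1 B.charpolyRev = 1 := by rw [hp1]; simp
  rw [Matrix.charpolyRev, ← Polynomial.coe_evalRingHom, RingHom.map_det] at h1
  have hmap : ((1 - (X : F[X]) • B.map Polynomial.C).map (Polynomial.evalRingHom 1)) = 1 - B := by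
    ext i j
    rcases eq_or_ne i j with rfl | hij
    · simp
    · simp [Matrix.one_apply, hij]
  rwa [RingHom.mapMatrix_apply, hmap] at h1

/-- Key lemma: determinant of the blown-up matrix equals the norm of the determinant. -/
lemma aux_det_comp_leftMulMatrix
    (F K : Type*) [Field F] [Field K] [Algebra F K] [FiniteDimensional F K]
    (ι : Type*) [Fintype ι] [DecidableEq ι]
    (b : Module.Basis ι F K) (n : ℕ) (M : Matrix (Fin n) (Fin n) K) :
    ((Matrix.compRingEquiv (Fin n) ι F).toRingHom.comp
        (RingHom.mapMatrix (Algebra.leftMulMatrix b).toRingHom) M).det =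
      Algebra.norm F M.det := by
  set φ := (Matrix.compRingEquiv (Fin n) ι F).toRingHom.comp
    (RingHom.mapMatrix (Algebra.leftMulMatrix b).toRingHom) with hφ
  induction M using Matrix.diagonal_transvection_induction with
  | hdiag D _ =>
    have : φ (Matrix.diagonal D) =
        (Matrix.reindex (Equiv.prodComm ι (Fin n)) (Equiv.prodComm ι (Fin n)))
          (Matrix.blockDiagonal fun k => Algebra.leftMulMatrix b (D k)) := by
      ext ⟨k, i⟩ ⟨l, j⟩
      simp only [hφ, RingHom.comp_apply, RingHom.mapMatrix_apply, RingEquiv.toRingHom_eq_coe,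
        RingEquiv.coe_toRingHom, Matrix.compRingEquiv_apply, Matrix.comp_apply, Matrix.map_apply,
        Matrix.reindex_apply, Matrix.submatrix_apply, Equiv.prodComm_symm, Equiv.prodComm_apply,
        Prod.swap_prod_mk, Matrix.blockDiagonal_apply, Matrix.diagonal_apply]
      split_ifs with hkl
      · rfl
      · simp
    rw [this, Matrix.det_reindex_self, Matrix.det_blockDiagonal]
    rw [Matrix.det_diagonal, map_prod]
    exact Finset.prod_congr rfl fun k _ => (Algebra.norm_eq_matrix_det b (D k)).symm
  | htransvec t =>
    rw [t.det, _root_.map_one]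
    obtain ⟨i, j, hij, c⟩ := t
    rw [Matrix.TransvectionStruct.toMatrix_mk, Matrix.transvection, map_add, _root_.map_one]
    have hsq : φ (Matrix.single i j c) * φ (Matrix.single i j c) = 0 := by
      rw [← _root_.map_mul, Matrix.single_mul_single_of_ne c i j i (Ne.symm hij) c, map_zero]
    have hnil : IsNilpotent (-(φ (Matrix.single i j c))) := ⟨2, by
      rw [pow_two, neg_mul_neg, hsq]⟩
    have := aux_det_one_sub_of_isNilpotent _ hnil
    rwa [sub_neg_eq_add] at this
  | hmul A B hA hB =>
    rw [_root_.map_mul, Matrix.det_mul, Matrix.det_mul, hA, hB, _root_.map_mul]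

theorem det_corestriction_eq_discr_pow_mul_norm_det
    (F K : Type*) [Field F] [Field K] [Algebra F K] [FiniteDimensional F K]
    [Algebra.IsSeparable F K] (ι : Type*) [Fintype ι] [DecidableEq ι]
    (b : Module.Basis ι F K) (n : ℕ) (M : Matrix (Fin n) (Fin n) K) :
    (Matrix.of fun p q : ι × Fin n =>
        Algebra.trace F K (b p.1 * b q.1 * M p.2 q.2)).det =
      Algebra.discr F ⇑b ^ n * Algebra.norm F M.det := by
  classical
  set T := Algebra.traceMatrix F b with hT
  set B : Matrix (ι × Fin n) (ι × Fin n) F :=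
    Matrix.of fun p q => Algebra.leftMulMatrix b (M p.2 q.2) p.1 q.1 with hB
  have key : (Matrix.of fun p q : ι × Fin n =>
      Algebra.trace F K (b p.1 * b q.1 * M p.2 q.2)) =
      (Matrix.kroneckerMap (· * ·) T (1 : Matrix (Fin n) (Fin n) F)) * B := by
    ext ⟨i, k⟩ ⟨j, l⟩
    rw [Matrix.mul_apply]
    rw [Fintype.sum_prod_type]
    simp only [Matrix.kroneckerMap_apply, Matrix.of_apply, hB]
    have : ∀ r : ι, ∑ s : Fin n, T i r * (1 : Matrix (Fin n) (Fin n) F) k s *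
        Algebra.leftMulMatrix b (M s l) r j
        = T i r * Algebra.leftMulMatrix b (M k l) r j := by
      intro r
      rw [Finset.sum_eq_single k]
      · simp
      · intro s _ hs
        simp [Matrix.one_apply, Ne.symm hs]
      · simp
    rw [Finset.sum_congr rfl fun r _ => this r]
    -- now prove trace identity
    have hrepr : b i * b j * M k l = ∑ r : ι, Algebra.leftMulMatrix b (M k l) r j • (b i * b r) := by
      have h1 : M k l * b j = ∑ r : ι, Algebra.leftMulMatrix b (M k l) r j • b r := by
        simp_rw [Algebra.leftMulMatrix_eq_repr_mul]
        exact (b.sum_repr (M k l * b j)).symm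
      calc b i * b j * M k l = b i * (M k l * b j) := by ring
        _ = ∑ r : ι, Algebra.leftMulMatrix b (M k l) r j • (b i * b r) := by
            rw [h1, Finset.mul_sum]
            exact Finset.sum_congr rfl fun r _ => by rw [Algebra.mul_smul_comm]
    rw [hrepr, map_sum]
    refine Finset.sum_congr rfl fun r _ => ?_
    rw [_root_.map_smul, smul_eq_mul, hT, Algebra.traceMatrix_apply, Algebra.traceForm_apply, mul_comm]
  rw [key, Matrix.det_mul, Matrix.det_kronecker, Matrix.det_one, one_pow, mul_one,
    Fintype.card_fin, ← Algebra.discr_def]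
  congr 1
  have hB' : B = (Matrix.reindex (Equiv.prodComm (Fin n) ι) (Equiv.prodComm (Fin n) ι))
      ((Matrix.compRingEquiv (Fin n) ι F).toRingHom.comp
        (RingHom.mapMatrix (Algebra.leftMulMatrix b).toRingHom) M) := by
    ext ⟨i, k⟩ ⟨j, l⟩
    rfl
  rw [hB', Matrix.det_reindex_self, aux_det_comp_leftMulMatrix]
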